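/- arXiv:2303.09489 — 3 statements merged into one kernel-verified Lean document; each statement's English description precedes it below -/
import Mathlib

section
/- Let A be the d×d shift matrix, B = e_1 the first standard basis vector, and C = (φ_1, …, φ_d) a row vector. Consider the state-space recursion x_{k+1} = A x_k + B u_k with x_0 = 0 and output y_k = C x_k. If the input satisfies u_k = y_k for all k (the SSM is driven by its own outputs), then for every k ≥ d, y_k = Σ_{i=1}^{d} φ_i y_{k-i}; that is, the system realizes the noiseless AR(d) autoregressive process with coefficients φ_1, …, φ_d. -/
open Matrix

/-- The `d × d` shift matrix over `ℝ`. -/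
def shiftMatrix (d : ℕ) : Matrix (Fin d) (Fin d) ℝ :=
  Matrix.of fun i j => if (i : ℕ) = (j : ℕ) + 1 then 1 else 0

lemma shiftMatrix_mulVec (d : ℕ) (v : Fin d → ℝ) (i : Fin d) :
    (shiftMatrix d).mulVec v i =
      if h : 0 < (i : ℕ) then v ⟨(i : ℕ) - 1, by omega⟩ else 0 := by
  unfold shiftMatrix
  simp only [mulVec, dotProduct, of_apply, ite_mul, one_mul, zero_mul]
  split
  · next h =>
    rw [Finset.sum_eq_single (⟨(i : ℕ) - 1, by omega⟩ : Fin d)]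
    · simp; omega
    · intro b _ hb
      rw [if_neg]
      intro hc
      apply hb
      apply Fin.ext
      simp
      omega
    · simp
  · next h =>
    apply Finset.sum_eq_zero
    intro b _
    rw [if_neg]
    omega

/-- The shift-matrix SSM with `B = e₁`, `C = φ`, driven by its own outputs,
realizes the noiseless AR(d) process `y k = ∑ i, φ i * y (k - 1 - i)`. -/
theorem stmt_4 (d : ℕ) (hd : 0 < d) (φ : Fin d → ℝ)
    (u y : ℕ → ℝ) (x : ℕ → Fin d → ℝ)
    (hx0 : x 0 = 0)
    (hx : ∀ k, x (k + 1) = (shiftMatrix d).mulVec (x k)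
        + u k • (Pi.single (⟨0, hd⟩ : Fin d) 1 : Fin d → ℝ))
    (hy : ∀ k, y k = φ ⬝ᵥ x k)
    (hu : ∀ k, u k = y k) :
    ∀ k, d ≤ k → y k = ∑ i : Fin d, φ i * y (k - 1 - (i : ℕ)) := by
  have key : ∀ k, ∀ j : Fin d, (j : ℕ) < k → x k j = u (k - 1 - (j : ℕ)) := by
    intro k
    induction k with
    | zero => intro j hj; omega
    | succ k ih =>
      intro j hj
      rw [hx k]
      simp only [Pi.add_apply, Pi.smul_apply, shiftMatrix_mulVec, smul_eq_mul]
      rcases Nat.eq_zero_or_pos (j : ℕ) with h0 | h0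
      · have : j = (⟨0, hd⟩ : Fin d) := Fin.ext h0
        subst this
        simp
      · rw [dif_pos h0, Pi.single_apply, if_neg (by
          intro hc; rw [hc] at h0; simp at h0), mul_zero, add_zero,
          ih ⟨(j : ℕ) - 1, by omega⟩ (by simp; omega)]
        congr 1
        simp
        omega
  intro k hk
  rw [hy k]
  unfold dotProduct
  apply Finset.sum_congr rfl
  intro i _
  rw [key k i (by omega), hu]
end

section
/- Let A ∈ ℝ^{d×d}, B ∈ ℝ^d, and suppose the Krylov matrix K = [B, AB, A²B, …, A^{d-1}B] is invertible (i.e., the pair (A,B) is controllable). Then G := K^{-1} A K is a companion matrix. That is, every controllable single-input linear system is similar to one in companion form. -/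
/-- The companion matrix with last column `a`, over `ℝ`. -/
def companion {d : ℕ} (a : Fin d → ℝ) : Matrix (Fin d) (Fin d) ℝ :=
  Matrix.of fun i j =>
    if (i : ℕ) = (j : ℕ) + 1 then 1 else if (j : ℕ) = d - 1 then a i else 0

/-- Every controllable single-input system is similar to companion form:
if the Krylov matrix `K = [B, AB, …, A^(d-1)B]` is invertible, then
`K⁻¹ A K` is a companion matrix. -/
theorem stmt_9 (d : ℕ) (A : Matrix (Fin d) (Fin d) ℝ) (B : Fin d → ℝ)
    (hK : IsUnit (Matrix.of fun i j : Fin d => (A ^ (j : ℕ)).mulVec B i)) :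
    ∃ c : Fin d → ℝ,
      (Matrix.of fun i j : Fin d => (A ^ (j : ℕ)).mulVec B i)⁻¹ * A *
        (Matrix.of fun i j : Fin d => (A ^ (j : ℕ)).mulVec B i) = companion c := by
  set K := (Matrix.of fun i j : Fin d => (A ^ (j : ℕ)).mulVec B i) with hKdef
  have hdet : IsUnit K.det := (Matrix.isUnit_iff_isUnit_det _).mp hK
  set c := K⁻¹.mulVec ((A ^ d).mulVec B) with hc
  have hKc : K.mulVec c = (A ^ d).mulVec B := by
    rw [hc, Matrix.mulVec_mulVec, Matrix.mul_nonsing_inv _ hdet, Matrix.one_mulVec]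
  refine ⟨c, ?_⟩
  have hmain : A * K = K * companion c := by
    ext i j
    have hAK : (A * K) i j = ((A ^ ((j:ℕ)+1)).mulVec B) i := by
      simp only [Matrix.mul_apply, hKdef, Matrix.of_apply, Matrix.mulVec, dotProduct,
        dotProduct, Finset.mul_sum]
      rw [Finset.sum_comm]
      refine Finset.sum_congr rfl fun m _ => ?_
      rw [pow_succ', Matrix.mul_apply, Finset.sum_mul]
      ring_nf
      exact Finset.sum_congr rfl fun x _ => by ring
    rw [hAK]
    rcases eq_or_ne (j : ℕ) (d - 1) with hj | hj
    · have hd : 0 < d := j.pos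
      have hj1 : (j : ℕ) + 1 = d := by omega
      rw [Matrix.mul_apply]
      have : ∀ k : Fin d, K i k * companion c k j = K i k * c k := by
        intro k
        have hkd := k.isLt
        have hk : ¬ ((k : ℕ) = d - 1 + 1) := by omega
        simp [companion, hj, hk]
      rw [Finset.sum_congr rfl fun k _ => this k]
      have hKci := congrFun hKc i
      simp only [Matrix.mulVec, dotProduct] at hKci ⊢
      rw [hKci, hj1]
    · have hj1 : (j : ℕ) + 1 < d := by omega
      rw [Matrix.mul_apply]
      have : ∀ k : Fin d, K i k * companion c k j =
          if k = (⟨(j:ℕ)+1, hj1⟩ : Fin d) then K i k else 0 := by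
        intro k
        by_cases hk : (k : ℕ) = (j : ℕ) + 1
        · simp [companion, hk, Fin.ext_iff]
        · simp [companion, hk, hj, Fin.ext_iff]
      rw [Finset.sum_congr rfl fun k _ => this k, Finset.sum_ite_eq' _ _ (fun k => K i k)]
      simp [hKdef]
  calc K⁻¹ * A * K = K⁻¹ * (A * K) := by rw [Matrix.mul_assoc]
    _ = K⁻¹ * K * companion c := by rw [hmain, Matrix.mul_assoc]
    _ = companion c := by rw [Matrix.nonsing_inv_mul _ hdet, Matrix.one_mul]
end

section
/- Let ω = exp(-2πi/ℓ) and A ∈ ℂ^{d×d}, B ∈ ℂ^{d}, C ∈ ℂ^{1×d}, and suppose I - Aω^m is invertible for all m = 0,…,ℓ-1. Define F^y ∈ ℂ^ℓ with F^y[j] = C A^j B. Then the discrete Fourier transform of F^y satisfies 𝔽(F^y)[m] = C (I - A^ℓ)(I - A ω^m)^{-1} B for each m. -/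
open Matrix

/-- The DFT of the output filter `F^y[j] = C A^j B` satisfies
`𝔽(F^y)[m] = C (I - A^ℓ)(I - A ω^m)⁻¹ B` where `ω = exp(-2πi/ℓ)`. -/
theorem stmt_12 (ℓ d : ℕ) (hℓ : 0 < ℓ)
    (A : Matrix (Fin d) (Fin d) ℂ) (B C : Fin d → ℂ)
    (hinv : ∀ m : ℕ, IsUnit (1 - (Complex.exp (-(2 * Real.pi * Complex.I) / ℓ)) ^ m • A)) :
    ∀ m < ℓ,
      ∑ j ∈ Finset.range ℓ,
          (C ⬝ᵥ (A ^ j).mulVec B) *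
            (Complex.exp (-(2 * Real.pi * Complex.I) / ℓ)) ^ (m * j) =
        C ⬝ᵥ (((1 - A ^ ℓ) *
            (1 - (Complex.exp (-(2 * Real.pi * Complex.I) / ℓ)) ^ m • A)⁻¹).mulVec B) := by
  intro m hm
  set ω : ℂ := Complex.exp (-(2 * Real.pi * Complex.I) / ℓ) with hωdef
  have hℓ0 : (ℓ : ℂ) ≠ 0 := Nat.cast_ne_zero.mpr hℓ.ne'
  have hωℓ : ω ^ ℓ = 1 := by
    rw [hωdef, ← Complex.exp_nat_mul, mul_div_cancel₀ _ hℓ0, Complex.exp_neg,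
      Complex.exp_two_pi_mul_I, inv_one]
  have hxℓ : (ω ^ m • A) ^ ℓ = A ^ ℓ := by
    rw [smul_pow, ← pow_mul, mul_comm m ℓ, pow_mul, hωℓ, one_pow, one_smul]
  have hdet : IsUnit (1 - ω ^ m • A).det :=
    (Matrix.isUnit_iff_isUnit_det _).mp (hinv m)
  have hM : (1 - A ^ ℓ) * (1 - ω ^ m • A)⁻¹
      = ∑ j ∈ Finset.range ℓ, (ω ^ m • A) ^ j := by
    have hgeom : (∑ j ∈ Finset.range ℓ, (ω ^ m • A) ^ j) * (1 - ω ^ m • A)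
        = 1 - A ^ ℓ := by
      have := geom_sum_mul (ω ^ m • A) ℓ
      calc (∑ j ∈ Finset.range ℓ, (ω ^ m • A) ^ j) * (1 - ω ^ m • A)
          = -((∑ j ∈ Finset.range ℓ, (ω ^ m • A) ^ j) * (ω ^ m • A - 1)) := by
            rw [← mul_neg, neg_sub]
        _ = -((ω ^ m • A) ^ ℓ - 1) := by rw [this]
        _ = 1 - A ^ ℓ := by rw [hxℓ, neg_sub]
    rw [← hgeom, mul_assoc, Matrix.mul_nonsing_inv _ hdet, mul_one]
  rw [hM]
  have h1 : ((∑ j ∈ Finset.range ℓ, (ω ^ m • A) ^ j) *ᵥ B)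
      = ∑ j ∈ Finset.range ℓ, ((ω ^ m • A) ^ j) *ᵥ B := by
    ext i
    simp only [Matrix.mulVec, dotProduct, Matrix.sum_apply, Finset.sum_apply, Finset.sum_mul]
    rw [Finset.sum_comm]

  have h2 : C ⬝ᵥ (∑ j ∈ Finset.range ℓ, ((ω ^ m • A) ^ j) *ᵥ B)
      = ∑ j ∈ Finset.range ℓ, C ⬝ᵥ (((ω ^ m • A) ^ j) *ᵥ B) := by
    simp only [dotProduct, Finset.sum_apply, Finset.mul_sum]
    rw [Finset.sum_comm]
  rw [h1, h2]
  refine Finset.sum_congr rfl fun j _ => ?_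
  rw [smul_pow, ← pow_mul, Matrix.smul_mulVec, dotProduct_smul, smul_eq_mul,
    mul_comm]
end
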